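/- Reduction correctness for Most-Orthogonal Vectors: given sets U = {u¹,…,uⁿ} and V = {v¹,…,vⁿ} of vectors in {0,1}^d, with sᵢ = VG₁(uⁱ) and tⱼ = VG₂(vʲ) (each of length at most 2d, all symbols weight 1) and P₁, P₂ constructed via the combining lemma with ℓ = 2d, it holds that WLCWIS(P₁,P₂) = d − min_{i,j} (uⁱ·vʲ) + (4n−2)·2d. In particular, there exist u ∈ U, v ∈ V with u·v ≤ r if and only if WLCWIS(P₁,P₂) ≥ d − r + (4n−2)·2d. -/

import Mathlib

open List

/-- `C` is a common weakly increasing subsequence of `A` and `B`. -/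
def CWIS {σ : Type*} [LinearOrder σ] (A B C : List σ) : Prop :=
  C.Chain' (· ≤ ·) ∧ C.Sublist A ∧ C.Sublist B

/-- Length of a longest common weakly increasing subsequence. -/
noncomputable def LCWIS {σ : Type*} [LinearOrder σ] (A B : List σ) : ℕ :=
  sSup {n | ∃ C : List σ, CWIS A B C ∧ C.length = n}

/-- Maximum total weight of a common weakly increasing subsequence. -/
noncomputable def WLCWIS {σ : Type*} [LinearOrder σ] (w : σ → ℕ) (A B : List σ) : ℕ :=
  sSup {n | ∃ C : List σ, CWIS A B C ∧ (C.map w).sum = n}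

/-- Blow-up: replace each symbol `a` by `w a` consecutive copies of `a`. -/
def blow {σ : Type*} (w : σ → ℕ) (X : List σ) : List σ :=
  X.flatMap fun a => List.replicate (w a) a

/-- First coordinate gadget. -/
def CG1 (x i : ℕ) : List ℕ := if x = 1 then [3*i+2] else [3*i, 3*i+1]

/-- Second coordinate gadget. -/
def CG2 (x i : ℕ) : List ℕ := if x = 1 then [3*i+1] else [3*i, 3*i+2]

/-- First vector gadget: concatenation of coordinate gadgets (coordinate `k` uses index `k+1`). -/
def VG1 {d : ℕ} (u : Fin d → ℕ) : List ℕ :=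
  (List.finRange d).flatMap fun k => CG1 (u k) (k.val + 1)

/-- Second vector gadget. -/
def VG2 {d : ℕ} (v : Fin d → ℕ) : List ℕ :=
  (List.finRange d).flatMap fun k => CG2 (v k) (k.val + 1)

/-- The sequence P₁ = A^{2n} s₁ YB s₂ YB … YB sₙ Z^{2n}. -/
def P1 {Ω : Type*} {n : ℕ} (s : Fin n → List Ω) (a b y z : Ω) : List Ω :=
  List.replicate (2*n) a ++ List.intercalate [y, b] ((List.finRange n).map s) ++
    List.replicate (2*n) z

/-- The sequence P₂ = (ZYBA)ⁿ t₁ ZYBA t₂ … ZYBA tₙ (ZYBA)ⁿ. -/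
def P2 {Ω : Type*} {n : ℕ} (t : Fin n → List Ω) (a b y z : Ω) : List Ω :=
  (List.replicate n [z, y, b, a]).flatten ++
    List.intercalate [z, y, b, a] ((List.finRange n).map t) ++
    (List.replicate n [z, y, b, a]).flatten
/-- The weight function of the reduction: A = 1 and Z = 3d+4 get weight ℓ = 2d,
B = 2 and Y = 3d+3 get weight 2ℓ = 4d, and all gadget symbols get weight 1. -/
def redWeight (d : ℕ) : ℕ → ℕ := fun x =>
  if x = 1 then 2*d
  else if x = 2 then 4*d
  else if x = 3*d+3 then 4*d
  else if x = 3*d+4 then 2*d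
  else 1

namespace MOV


lemma prefix_append_cases {α} {p M K : List α} (h : p <+: M ++ K) :
    p <+: M ∨ ∃ q, p = M ++ q ∧ q <+: K := by
  obtain ⟨t, ht⟩ := h
  rcases List.append_eq_append_iff.1 ht with ⟨a', h1, h2⟩ | ⟨c', h1, h2⟩
  · exact Or.inl ⟨a', h1.symm⟩
  · exact Or.inr ⟨c', h1, t, h2.symm⟩

lemma suffix_append_cases {α} {q M K : List α} (h : q <:+ M ++ K) :
    q <:+ K ∨ ∃ p, q = p ++ K ∧ p <:+ M := by
  obtain ⟨t, ht⟩ := h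
  rcases List.append_eq_append_iff.1 ht with ⟨a', h1, h2⟩ | ⟨c', h1, h2⟩
  · exact Or.inr ⟨a', h2, ⟨t, h1.symm⟩⟩
  · exact Or.inl ⟨c', h2.symm⟩

lemma infix_append_cases {α} {Q M K : List α} (h : Q <:+: M ++ K) :
    Q <:+: M ∨ Q <:+: K ∨ ∃ q1 q2, Q = q1 ++ q2 ∧ q1 <:+ M ∧ q2 <+: K := by
  obtain ⟨pp, ss, e⟩ := h
  rw [List.append_assoc] at e
  rcases List.append_eq_append_iff.1 e with ⟨a', h1, h2⟩ | ⟨c', h1, h2⟩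
  · rcases List.append_eq_append_iff.1 h2 with ⟨b, hb1, hb2⟩ | ⟨c, hc1, hc2⟩
    · exact Or.inl ⟨pp, b, by rw [h1, hb1, List.append_assoc]⟩
    · exact Or.inr (Or.inr ⟨a', c, hc1, ⟨pp, h1.symm⟩, ⟨ss, hc2.symm⟩⟩)
  · exact Or.inr (Or.inl ⟨c', ss, by rw [h2, List.append_assoc]⟩)

lemma replicate_sublist_flatMap {α β} (x : β) (g : α → List β) :
    ∀ (l : List α), (∀ m ∈ l, x ∈ g m) → List.replicate l.length x <+ l.flatMap g
  | [], _ => by simp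
  | a :: l, h => by
    rw [List.length_cons, List.replicate_succ, List.flatMap_cons]
    have h1 : [x] <+ g a := List.singleton_sublist.2 (h a (by simp))
    have h2 := replicate_sublist_flatMap x g l (fun m hm => h m (by simp [hm]))
    simpa using List.Sublist.append h1 h2

lemma sublist_flatMap_of {α β} (f g : α → List β) :
    ∀ (l : List α), (∀ a ∈ l, f a <+ g a) → l.flatMap f <+ l.flatMap g
  | [], _ => by simp
  | a :: l, h => by
    rw [List.flatMap_cons, List.flatMap_cons]
    exact List.Sublist.append (h a (by simp))
      (sublist_flatMap_of f g l (fun b hb => h b (by simp [hb])))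

lemma sum_map_eq_length {w : ℕ → ℕ} : ∀ {G : List ℕ}, (∀ x ∈ G, w x = 1) →
    (G.map w).sum = G.length
  | [], _ => rfl
  | a :: G, h => by
    rw [List.map_cons, List.sum_cons, List.length_cons, h a (by simp),
      sum_map_eq_length (fun x hx => h x (by simp [hx]))]
    omega

/-- Splitting a sorted list at a threshold. -/
lemma sorted_split (c : ℕ) : ∀ {C : List ℕ}, C.Pairwise (· ≤ ·) →
    C = C.filter (fun x => decide (x ≤ c)) ++ C.filter (fun x => !decide (x ≤ c))
  | [], _ => rfl
  | x :: C, h => by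
    rw [List.pairwise_cons] at h
    by_cases hx : x ≤ c
    · rw [List.filter_cons_of_pos (by simpa using hx),
        List.filter_cons_of_neg (by simpa using hx)]
      rw [List.cons_append]
      exact congrArg _ (sorted_split c h.2)
    · rw [List.filter_cons_of_neg (by simpa using hx),
        List.filter_cons_of_pos (by simpa using hx)]
      have h1 : C.filter (fun x => decide (x ≤ c)) = [] := by
        rw [List.filter_eq_nil_iff]
        intro a ha
        simp only [decide_eq_true_eq]
        exact fun hac => hx (le_trans (h.1 a ha) hac)
      have := sorted_split c h.2
      rw [h1] at this ⊢
      simpa using this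

lemma count_flatMap {α} (a : ℕ) (f : α → List ℕ) (l : List α) :
    List.count a (l.flatMap f) = (l.map (fun m => List.count a (f m))).sum := by
  rw [List.flatMap, List.count_flatten, List.map_map]
  rfl

lemma sum_map_const {α} {c : ℕ} {f : α → ℕ} : ∀ {l : List α}, (∀ x ∈ l, f x = c) →
    (l.map f).sum = c * l.length
  | [], _ => by simp
  | a :: l, h => by
    rw [List.map_cons, List.sum_cons, List.length_cons, h a (by simp),
      sum_map_const (fun x hx => h x (by simp [hx]))]
    ring



/-- `Jn Y [m₀,…,m_k] T = m₀ ++ Y :: m₁ ++ Y :: … ++ Y :: T`. -/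
def Jn (Y : ℕ) : List (List ℕ) → List ℕ → List ℕ
  | [], T => T
  | m :: l, T => m ++ Y :: Jn Y l T

lemma Jn_append_right (Y : ℕ) (X : List ℕ) : ∀ (l : List (List ℕ)) (T : List ℕ),
    Jn Y l T ++ X = Jn Y l (T ++ X)
  | [], T => rfl
  | m :: l, T => by
    simp only [Jn, List.append_assoc, List.cons_append]
    rw [← Jn_append_right Y X l T]

lemma append_Jn_cons (Y : ℕ) (X m : List ℕ) (l : List (List ℕ)) (T : List ℕ) :
    X ++ Jn Y (m :: l) T = Jn Y ((X ++ m) :: l) T := by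
  simp [Jn, List.append_assoc]

lemma Jn_concat (Y : ℕ) : ∀ (l1 l2 : List (List ℕ)) (T : List ℕ),
    Jn Y (l1 ++ l2) T = Jn Y l1 (Jn Y l2 T)
  | [], l2, T => rfl
  | m :: l1, l2, T => by simp [Jn, Jn_concat Y l1 l2 T]

lemma count_Jn {Y : ℕ} : ∀ {l : List (List ℕ)} {T : List ℕ},
    (∀ m ∈ l, List.count Y m = 0) → List.count Y T = 0 →
    List.count Y (Jn Y l T) = l.length
  | [], T, _, hT => hT
  | m :: l, T, hl, hT => by
    simp only [Jn, List.count_append, List.count_cons, List.length_cons]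
    rw [hl m (by simp), count_Jn (fun m hm => hl m (by simp [hm])) hT]
    simp

lemma mem_Jn {Y x : ℕ} : ∀ {l : List (List ℕ)} {T : List ℕ},
    x ∈ Jn Y l T → x = Y ∨ (∃ m ∈ l, x ∈ m) ∨ x ∈ T
  | [], T, h => Or.inr (Or.inr h)
  | m :: l, T, h => by
    rcases List.mem_append.1 h with h | h
    · exact Or.inr (Or.inl ⟨m, by simp, h⟩)
    · rcases List.mem_cons.1 h with h | h
      · exact Or.inl h
      · rcases mem_Jn h with h | ⟨m', hm', hx⟩ | h
        · exact Or.inl h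
        · exact Or.inr (Or.inl ⟨m', by simp [hm'], hx⟩)
        · exact Or.inr (Or.inr h)

/-- prefix invariant: within-block goodness lifts to `Jn`. -/
lemma preG_Jn {x y Y : ℕ} (hxY : x ≠ Y) :
    ∀ {l : List (List ℕ)} {T : List ℕ},
    (∀ m ∈ l, ∀ p, p <+: m → List.count x p ≤ List.count y p) →
    (∀ p, p <+: T → List.count x p ≤ List.count y p) →
    ∀ p, p <+: Jn Y l T → List.count x p ≤ List.count y p
  | [], T, _, hT, p, hp => hT p hp
  | m :: l, T, hl, hT, p, hp => by
    rcases prefix_append_cases hp with hp | ⟨q, rfl, hq⟩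
    · exact hl m (by simp) p hp
    · rcases List.prefix_cons_iff.1 hq with rfl | ⟨q', rfl, hq'⟩
      · simpa using hl m (by simp) m (List.prefix_refl m)
      · have h1 := hl m (by simp) m (List.prefix_refl m)
        have h2 := preG_Jn hxY (fun m' hm' => hl m' (by simp [hm'])) hT q' hq'
        simp only [List.count_append, List.count_cons]
        have : (Y == x) = false := by simpa using fun h => hxY h.symm
        simp [this]
        omega

/-- prefix invariant with separator credit: `count x` prefix-bounded by `count Y`. -/
lemma preG_Jn_sep_aux {x Y : ℕ} (hxY : x ≠ Y) :
    ∀ {l : List (List ℕ)} {T : List ℕ},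
    (∀ m ∈ l, List.count x m ≤ 1) → List.count x T ≤ 1 →
    ∀ p, p <+: Jn Y l T → List.count x p ≤ List.count Y p + 1
  | [], T, _, hT, p, hp => by
    calc List.count x p ≤ List.count x T := (hp.sublist).count_le x
    _ ≤ _ := by omega
  | m :: l, T, hl, hT, p, hp => by
    rcases prefix_append_cases hp with hp | ⟨q, rfl, hq⟩
    · have := (hp.sublist).count_le x
      have := hl m (by simp)
      omega
    · rcases List.prefix_cons_iff.1 hq with rfl | ⟨q', rfl, hq'⟩
      · have := hl m (by simp); simp; omega
      · have h2 := preG_Jn_sep_aux hxY (fun m' hm' => hl m' (by simp [hm'])) hT q' hq'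
        have h1 := hl m (by simp)
        simp only [List.count_append, List.count_cons]
        have hx : (Y == x) = false := by simpa using fun h => hxY h.symm
        simp [hx]
        omega

lemma preG_Jn_sep {x Y : ℕ} (hxY : x ≠ Y) {m0 : List ℕ} {l : List (List ℕ)} {T : List ℕ}
    (h0 : List.count x m0 = 0)
    (hl : ∀ m ∈ l, List.count x m ≤ 1) (hT : List.count x T ≤ 1) :
    ∀ p, p <+: Jn Y (m0 :: l) T → List.count x p ≤ List.count Y p := by
  intro p hp
  rcases prefix_append_cases hp with hp | ⟨q, rfl, hq⟩
  · have := (hp.sublist).count_le x; omega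
  · rcases List.prefix_cons_iff.1 hq with rfl | ⟨q', rfl, hq'⟩
    · simp [h0]
    · have h2 := preG_Jn_sep_aux hxY hl hT q' hq'
      simp only [List.count_append, List.count_cons, h0]
      have hx : (Y == x) = false := by simpa using fun h => hxY h.symm
      simp [hx]
      omega

/-- suffix invariant with separator credit. -/
lemma sufG_Jn_sep {x Y : ℕ} (hxY : x ≠ Y) :
    ∀ {l : List (List ℕ)} {T : List ℕ},
    (∀ m ∈ l, List.count x m ≤ 1) → List.count x T = 0 →
    ∀ q, q <:+ Jn Y l T → List.count x q ≤ List.count Y q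
  | [], T, _, hT, q, hq => by
    have h := (hq.sublist).count_le x
    simp only [Jn] at h
    omega
  | m :: l, T, hl, hT, q, hq => by
    have hfull : List.count x (Jn Y l T) ≤ List.count Y (Jn Y l T) :=
      sufG_Jn_sep hxY (fun m' hm' => hl m' (by simp [hm'])) hT _ (List.suffix_refl _)
    rcases suffix_append_cases hq with hq | ⟨p, rfl, hp⟩
    · rcases suffix_append_cases (M := [Y]) (by simpa using hq :
        q <:+ [Y] ++ Jn Y l T) with hq2 | ⟨p, rfl, hp⟩
      · exact sufG_Jn_sep hxY (fun m' hm' => hl m' (by simp [hm'])) hT q hq2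
      · have hx : (Y == x) = false := by simpa using fun h => hxY h.symm
        have hpY : p <+ [Y] := hp.sublist
        have := hpY.count_le x
        have := hpY.count_le Y
        simp only [List.count_append]
        simp only [List.count_singleton, hx] at *
        simp at *
        omega
    · have h1 := (hp.sublist).count_le x
      have hm := hl m (by simp)
      have hx : (Y == x) = false := by simpa using fun h => hxY h.symm
      simp only [List.count_append, List.count_cons, hx]
      simp
      omega


lemma seg {isG : ℕ → Bool} {Y : ℕ} {ι : Type*} {S : ι → List ℕ} {D : ℕ} (i0 : ι)
    (hGY : isG Y = false) (hS : ∀ i, (S i).length ≤ D) :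
    ∀ {l : List (List ℕ)} {T : List ℕ},
      (∀ m ∈ l, ∃ i, m.filter isG <+ S i) → (∃ i, T.filter isG <+ S i) →
      ∀ Q, Q <:+: Jn Y l T →
        (Q.filter isG).length ≤ (List.count Y Q + 1) * D ∧
        (List.count Y Q = 0 → ∃ i, Q.filter isG <+ S i)
  | [], T, _, hT, Q, hQ => by
    obtain ⟨i, hi⟩ := hT
    have h1 : Q.filter isG <+ S i := ((hQ.sublist).filter isG).trans hi
    have h2 : (Q.filter isG).length ≤ D := (h1.length_le).trans (hS i)
    exact ⟨h2.trans (Nat.le_mul_of_pos_left D (by omega)), fun _ => ⟨i, h1⟩⟩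
  | m :: l, T, hl, hT, Q, hQ => by
    have IH := seg i0 hGY hS (l := l) (T := T)
      (fun m' hm' => hl m' (by simp [hm'])) hT
    obtain ⟨i, hi⟩ := hl m (by simp)
    rcases infix_append_cases (show Q <:+: m ++ (Y :: Jn Y l T) from hQ)
      with h | h | ⟨q1, q2, rfl, hq1, hq2⟩
    · have h1 : Q.filter isG <+ S i := ((h.sublist).filter isG).trans hi
      have h2 : (Q.filter isG).length ≤ D := (h1.length_le).trans (hS i)
      exact ⟨h2.trans (Nat.le_mul_of_pos_left D (by omega)), fun _ => ⟨i, h1⟩⟩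
    · rcases List.infix_cons_iff.1 h with h | h
      · rcases List.prefix_cons_iff.1 h with rfl | ⟨q', rfl, hq'⟩
        · exact ⟨by simp, fun _ => ⟨i0, by simp⟩⟩
        · obtain ⟨ih1, _⟩ := IH q' hq'.isInfix
          constructor
          · rw [List.filter_cons_of_neg (by simp [hGY]), List.count_cons_self]
            calc (q'.filter isG).length ≤ (List.count Y q' + 1) * D := ih1
            _ ≤ _ := Nat.mul_le_mul_right D (by omega)
          · intro hc
            rw [List.count_cons_self] at hc
            omega
      · exact IH Q h
    · rcases List.prefix_cons_iff.1 hq2 with rfl | ⟨p, rfl, hp⟩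
      · have h1 : (q1 ++ []).filter isG <+ S i := by
          simpa using ((hq1.sublist).filter isG).trans hi
        have h2 : ((q1 ++ []).filter isG).length ≤ D := (h1.length_le).trans (hS i)
        exact ⟨h2.trans (Nat.le_mul_of_pos_left D (by omega)), fun _ => ⟨i, h1⟩⟩
      · obtain ⟨ih1, _⟩ := IH p hp.isInfix
        have hq1' : (q1.filter isG).length ≤ D :=
          (((hq1.sublist).filter isG).trans hi).length_le.trans (hS i)
        constructor
        · rw [List.filter_append, List.filter_cons_of_neg (by simp [hGY]),
            List.length_append, List.count_append, List.count_cons_self]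
          calc (q1.filter isG).length + (p.filter isG).length
              ≤ D + (List.count Y p + 1) * D := by omega
            _ = (List.count Y p + 2) * D := by ring
            _ ≤ _ := Nat.mul_le_mul_right D (by omega)
        · intro hc
          rw [List.count_append, List.count_cons_self] at hc
          omega




lemma sum_map_le {α} {c : ℕ} {f : α → ℕ} : ∀ {l : List α}, (∀ x ∈ l, f x ≤ c) →
    (l.map f).sum ≤ c * l.length
  | [], _ => by simp
  | a :: l, h => by
    have h1 : (l.map f).sum ≤ c * l.length :=
      sum_map_le (fun x hx => h x (List.mem_cons_of_mem a hx))
    have h2 := h a List.mem_cons_self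
    rw [List.map_cons, List.sum_cons, List.length_cons]
    nlinarith

lemma mem_CG1 {x a i : ℕ} (h : x ∈ CG1 a i) : 3*i ≤ x ∧ x ≤ 3*i+2 := by
  unfold CG1 at h; split at h <;> simp at h <;> omega

lemma mem_CG2 {x a i : ℕ} (h : x ∈ CG2 a i) : 3*i ≤ x ∧ x ≤ 3*i+2 := by
  unfold CG2 at h; split at h <;> simp at h <;> omega

lemma length_CG1 (a i : ℕ) : (CG1 a i).length ≤ 2 := by
  unfold CG1; split <;> simp

lemma length_CG2 (a i : ℕ) : (CG2 a i).length ≤ 2 := by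
  unfold CG2; split <;> simp

lemma length_VG1 {d : ℕ} (u : Fin d → ℕ) : (VG1 u).length ≤ 2*d := by
  rw [VG1, List.length_flatMap]
  calc _ ≤ 2 * (List.finRange d).length := sum_map_le (fun k _ => length_CG1 _ _)
  _ = 2*d := by simp

lemma length_VG2 {d : ℕ} (v : Fin d → ℕ) : (VG2 v).length ≤ 2*d := by
  rw [VG2, List.length_flatMap]
  calc _ ≤ 2 * (List.finRange d).length := sum_map_le (fun k _ => length_CG2 _ _)
  _ = 2*d := by simp

lemma mem_VG1 {d : ℕ} {u : Fin d → ℕ} {x : ℕ} (h : x ∈ VG1 u) :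
    ∃ k : Fin d, x ∈ CG1 (u k) (k.val + 1) := by
  rw [VG1, List.mem_flatMap] at h; obtain ⟨k, _, hk⟩ := h; exact ⟨k, hk⟩

lemma mem_VG2 {d : ℕ} {v : Fin d → ℕ} {x : ℕ} (h : x ∈ VG2 v) :
    ∃ k : Fin d, x ∈ CG2 (v k) (k.val + 1) := by
  rw [VG2, List.mem_flatMap] at h; obtain ⟨k, _, hk⟩ := h; exact ⟨k, hk⟩

lemma VG1_range {d : ℕ} {u : Fin d → ℕ} {x : ℕ} (h : x ∈ VG1 u) : 3 ≤ x ∧ x ≤ 3*d+2 := by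
  obtain ⟨k, hk⟩ := mem_VG1 h
  have := mem_CG1 hk
  have := k.isLt
  omega

lemma VG2_range {d : ℕ} {v : Fin d → ℕ} {x : ℕ} (h : x ∈ VG2 v) : 3 ≤ x ∧ x ≤ 3*d+2 := by
  obtain ⟨k, hk⟩ := mem_VG2 h
  have := mem_CG2 hk
  have := k.isLt
  omega

lemma pairwise_flatMap_fin {d : ℕ} {f : Fin d → List ℕ}
    (h1 : ∀ k, (f k).Pairwise (· < ·))
    (h2 : ∀ k x, x ∈ f k → 3*(k.val+1) ≤ x ∧ x ≤ 3*(k.val+1)+2) :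
    ((List.finRange d).flatMap f).Pairwise (· < ·) := by
  rw [List.flatMap, List.pairwise_flatten]
  constructor
  · intro l' hl'
    rw [List.mem_map] at hl'
    obtain ⟨k, _, rfl⟩ := hl'
    exact h1 k
  · rw [List.pairwise_map]
    refine (List.pairwise_lt_finRange d).imp_of_mem ?_
    intro k k' _ _ hkk' x hx y hy
    have := h2 k x hx
    have := h2 k' y hy
    have : k.val < k'.val := hkk'
    omega

lemma VG1_sorted {d : ℕ} (u : Fin d → ℕ) : (VG1 u).Pairwise (· < ·) := by
  refine pairwise_flatMap_fin (fun k => ?_) (fun k x hx => mem_CG1 hx)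
  unfold CG1; split <;> simp

lemma VG2_sorted {d : ℕ} (v : Fin d → ℕ) : (VG2 v).Pairwise (· < ·) := by
  refine pairwise_flatMap_fin (fun k => ?_) (fun k x hx => mem_CG2 hx)
  unfold CG2; split <;> simp

/-- The gadget upper bound : a common sublist of the two vector gadgets
has length at most `d - u·v`. -/
lemma gadget_ub {d : ℕ} {u v : Fin d → ℕ} (hu : ∀ k, u k = 0 ∨ u k = 1)
    (hv : ∀ k, v k = 0 ∨ v k = 1) {G : List ℕ}
    (h1 : G <+ VG1 u) (h2 : G <+ VG2 v) :
    G.length + ∑ k : Fin d, u k * v k ≤ d := by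
  classical
  have hnd : G.Nodup := ((VG1_sorted u).sublist h1).imp (fun h => Nat.ne_of_lt h)
  set ok : Fin d → Finset ℕ :=
    fun k => (CG1 (u k) (k.val+1)).toFinset ∩ (CG2 (v k) (k.val+1)).toFinset with hok
  have hsub : G.toFinset ⊆ Finset.univ.biUnion ok := by
    intro x hx
    rw [List.mem_toFinset] at hx
    obtain ⟨k, hk⟩ := mem_VG1 (h1.subset hx)
    obtain ⟨k', hk'⟩ := mem_VG2 (h2.subset hx)
    have e1 := mem_CG1 hk
    have e2 := mem_CG2 hk'
    have : k = k' := by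
      apply Fin.ext
      omega
    subst this
    rw [Finset.mem_biUnion]
    exact ⟨k, Finset.mem_univ k, by simp [hok, hk, hk']⟩
  have hcard : ∀ k : Fin d, (ok k).card + u k * v k ≤ 1 := by
    intro k
    rcases hu k with h | h <;> rcases hv k with h' | h'
    case inr.inr =>
      have he : ok k = ∅ := by
        apply Finset.eq_empty_of_forall_notMem
        intro x hx
        simp [hok, CG1, CG2, h, h'] at hx
      rw [he, h, h']
      simp
    all_goals {
      have hle : (ok k).card ≤ 1 := by
        apply Finset.card_le_one.2
        intro a ha b hb
        simp only [hok, CG1, CG2, h, h', Finset.mem_inter, List.mem_toFinset] at ha hb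
        simp at ha hb
        omega
      simp only [h, h']
      omega }
  have hG : G.length ≤ ∑ k : Fin d, (ok k).card := by
    rw [← List.toFinset_card_of_nodup hnd]
    calc G.toFinset.card ≤ (Finset.univ.biUnion ok).card := Finset.card_le_card hsub
    _ ≤ _ := Finset.card_biUnion_le
  have : ∑ k : Fin d, ((ok k).card + u k * v k) ≤ ∑ k : Fin d, 1 :=
    Finset.sum_le_sum (fun k _ => hcard k)
  rw [Finset.sum_add_distrib] at this
  simp only [Finset.sum_const, Finset.card_univ, Fintype.card_fin, smul_eq_mul, mul_one] at this
  omega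

/-- the choice list for the lower bound. -/
def pick (a b i : ℕ) : List ℕ :=
  if a = 1 then (if b = 1 then [] else [3*i+2]) else (if b = 1 then [3*i+1] else [3*i])

def G0 {d : ℕ} (u v : Fin d → ℕ) : List ℕ :=
  (List.finRange d).flatMap fun k => pick (u k) (v k) (k.val + 1)

lemma pick_sublist1 (a b i : ℕ) : pick a b i <+ CG1 a i := by
  unfold pick CG1
  split <;> split <;> simp

lemma pick_sublist2 (a b i : ℕ) : pick a b i <+ CG2 b i := by
  rcases eq_or_ne a 1 with rfl | ha <;> rcases eq_or_ne b 1 with rfl | hb <;>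
    simp [pick, CG2, *]

lemma mem_pick {x a b i : ℕ} (h : x ∈ pick a b i) : 3*i ≤ x ∧ x ≤ 3*i+2 := by
  unfold pick at h; split at h <;> split at h <;> simp at h <;> omega

lemma length_pick {a b : ℕ} (ha : a = 0 ∨ a = 1) (hb : b = 0 ∨ b = 1) (i : ℕ) :
    (pick a b i).length + a * b = 1 := by
  unfold pick
  rcases ha with rfl | rfl <;> rcases hb with rfl | rfl <;> simp

lemma G0_sublist1 {d : ℕ} (u v : Fin d → ℕ) : G0 u v <+ VG1 u :=
  sublist_flatMap_of _ _ _ (fun k _ => pick_sublist1 _ _ _)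

lemma G0_sublist2 {d : ℕ} (u v : Fin d → ℕ) : G0 u v <+ VG2 v :=
  sublist_flatMap_of _ _ _ (fun k _ => pick_sublist2 _ _ _)

lemma G0_length {d : ℕ} {u v : Fin d → ℕ} (hu : ∀ k, u k = 0 ∨ u k = 1)
    (hv : ∀ k, v k = 0 ∨ v k = 1) :
    (G0 u v).length + ∑ k : Fin d, u k * v k = d := by
  rw [G0, List.length_flatMap]
  have : ∀ g : Fin d → ℕ, (List.map g (List.finRange d)).sum = ∑ k : Fin d, g k :=
    fun g => (Fin.sum_univ_def g).symm
  rw [this, ← Finset.sum_add_distrib]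
  calc ∑ k : Fin d, ((pick (u k) (v k) (k.val+1)).length + u k * v k)
      = ∑ k : Fin d, 1 := Finset.sum_congr rfl (fun k _ => length_pick (hu k) (hv k) _)
  _ = d := by simp

lemma G0_sorted {d : ℕ} (u v : Fin d → ℕ) : (G0 u v).Pairwise (· < ·) :=
  pairwise_flatMap_fin (fun k => by unfold pick; split <;> split <;> simp)
    (fun k x hx => mem_pick hx)

lemma G0_range {d : ℕ} {u v : Fin d → ℕ} {x : ℕ} (h : x ∈ G0 u v) : 3 ≤ x ∧ x ≤ 3*d+2 := by
  rw [G0, List.mem_flatMap] at h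
  obtain ⟨k, _, hk⟩ := h
  have := mem_pick hk
  have := k.isLt
  omega


def cells (Y : ℕ) (pre post : List ℕ) : List (List ℕ) → List (List ℕ) × List ℕ
  | [] => ([], [])
  | m :: r =>
    match cells Y pre post r with
    | ([], T) => ([pre], post ++ m ++ T)
    | (m2 :: l, T) => (pre :: (post ++ m ++ m2) :: l, T)

lemma cells_cons_nil {Y : ℕ} {pre post m : List ℕ} {r : List (List ℕ)} {T : List ℕ}
    (h : cells Y pre post r = ([], T)) :
    cells Y pre post (m :: r) = ([pre], post ++ m ++ T) := by
  simp [cells, h]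

lemma cells_cons_cons {Y : ℕ} {pre post m m2 : List ℕ} {r l : List (List ℕ)} {T : List ℕ}
    (h : cells Y pre post r = (m2 :: l, T)) :
    cells Y pre post (m :: r) = (pre :: (post ++ m ++ m2) :: l, T) := by
  simp [cells, h]

lemma cells_fst_len (Y : ℕ) (pre post : List ℕ) :
    ∀ (r : List (List ℕ)), (cells Y pre post r).1.length = r.length
  | [] => rfl
  | m :: r => by
    have IH := cells_fst_len Y pre post r
    rcases h : cells Y pre post r with ⟨c1, T⟩
    rcases c1 with _ | ⟨m2, l⟩
    · rw [cells_cons_nil h]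
      rw [h] at IH
      simp at IH
      simp [← IH]
    · rw [cells_cons_cons h]
      rw [h] at IH
      simp at IH ⊢
      omega

lemma cells_fst_head (Y : ℕ) (pre post : List ℕ) :
    ∀ (r : List (List ℕ)) {m2 : List ℕ} {l : List (List ℕ)} {T : List ℕ},
      cells Y pre post r = (m2 :: l, T) → m2 = pre
  | [], m2, l, T, h => by simp [cells] at h
  | m :: r, m2, l, T, h => by
    rcases h2 : cells Y pre post r with ⟨c1, T'⟩
    rcases c1 with _ | ⟨m3, l'⟩
    · rw [cells_cons_nil h2] at h
      have := congrArg Prod.fst h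
      simp at this
      exact this.1.symm
    · rw [cells_cons_cons h2] at h
      have := congrArg Prod.fst h
      simp at this
      exact this.1.symm

lemma cells_spec (Y : ℕ) (pre post : List ℕ) : ∀ (r : List (List ℕ)),
    r.flatMap (fun m => pre ++ Y :: (post ++ m)) =
      Jn Y (cells Y pre post r).1 (cells Y pre post r).2
  | [] => rfl
  | m :: r => by
    have IH := cells_spec Y pre post r
    rcases h : cells Y pre post r with ⟨c1, T⟩
    rw [h] at IH
    rcases c1 with _ | ⟨m2, l⟩
    · rw [cells_cons_nil h, List.flatMap_cons, IH]
      simp [Jn, List.append_assoc]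
    · have hm2 : m2 = pre := cells_fst_head Y pre post r h
      rw [cells_cons_cons h, List.flatMap_cons, IH]
      simp [Jn, List.append_assoc]

lemma cells_shapes (Y : ℕ) (pre post : List ℕ) : ∀ (r : List (List ℕ)),
    (∀ b ∈ (cells Y pre post r).1, b = pre ∨ ∃ m ∈ r, b = post ++ m ++ pre) ∧
    ((cells Y pre post r).2 = [] ∨ ∃ m ∈ r, (cells Y pre post r).2 = post ++ m)
  | [] => by simp [cells]
  | m :: r => by
    have IH := cells_shapes Y pre post r
    rcases h : cells Y pre post r with ⟨c1, T⟩
    rw [h] at IH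
    rcases c1 with _ | ⟨m2, l⟩
    · have hr : r = [] := by
        have := cells_fst_len Y pre post r
        rw [h] at this
        simpa using this.symm
      subst hr
      have hT : T = [] := by simpa [cells] using h
      subst hT
      rw [cells_cons_nil h]
      constructor
      · intro b hb
        simp at hb
        exact Or.inl hb
      · right
        exact ⟨m, by simp⟩
    · have hm2 : m2 = pre := cells_fst_head Y pre post r h
      subst hm2
      rw [cells_cons_cons h]
      constructor
      · intro b hb
        rcases List.mem_cons.1 hb with rfl | hb
        · exact Or.inl rfl
        rcases List.mem_cons.1 hb with rfl | hb
        · exact Or.inr ⟨m, by simp⟩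
        · rcases IH.1 b (by simp [hb]) with h' | ⟨m', hm', h'⟩
          · exact Or.inl h'
          · exact Or.inr ⟨m', by simp [hm'], h'⟩
      · rcases IH.2 with h' | ⟨m', hm', h'⟩
        · exact Or.inl h'
        · exact Or.inr ⟨m', by simp [hm'], h'⟩


lemma intercalate_expand {α} (sep : List α) : ∀ (m0 : List α) (r : List (List α)),
    List.intercalate sep (m0 :: r) = m0 ++ r.flatMap (fun m => sep ++ m)
  | m0, [] => by simp [List.intercalate]
  | m0, m1 :: r => by
    have IH := intercalate_expand sep m1 r
    rw [List.intercalate, List.intersperse_cons_cons, List.flatten_cons, List.flatten_cons,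
      List.flatMap_cons, ← List.intercalate]
    rw [IH]
    simp [List.append_assoc]

lemma rep_blk (Z Y B A : ℕ) : ∀ (n : ℕ),
    (List.replicate (n+1) [Z,Y,B,A]).flatten = Jn Y ([Z] :: List.replicate n [B,A,Z]) [B,A]
  | 0 => by simp [Jn]
  | n+1 => by
    rw [List.replicate_succ, List.flatten_cons, rep_blk Z Y B A n,
      show List.replicate (n+1) [B,A,Z] = [B,A,Z] :: List.replicate n [B,A,Z] from rfl]
    simp [Jn]


def isG (d : ℕ) : ℕ → Bool := fun x => decide (3 ≤ x ∧ x ≤ 3*d+2)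

lemma isG_true {d x : ℕ} (h : 3 ≤ x ∧ x ≤ 3*d+2) : isG d x = true := by
  simp [isG]; omega

lemma isG_false {d x : ℕ} (h : ¬ (3 ≤ x ∧ x ≤ 3*d+2)) : isG d x = false := by
  simp [isG]; omega

lemma filter_VG1 {d : ℕ} (u : Fin d → ℕ) : (VG1 u).filter (isG d) = VG1 u :=
  List.filter_eq_self.2 (fun x hx => isG_true (VG1_range hx))

lemma filter_VG2 {d : ℕ} (v : Fin d → ℕ) : (VG2 v).filter (isG d) = VG2 v :=
  List.filter_eq_self.2 (fun x hx => isG_true (VG2_range hx))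

lemma count_VG1_zero {d c : ℕ} (u : Fin d → ℕ) (hc : ¬ (3 ≤ c ∧ c ≤ 3*d+2)) :
    List.count c (VG1 u) = 0 :=
  List.count_eq_zero.2 (fun hmem => hc (VG1_range hmem))

lemma count_VG2_zero {d c : ℕ} (v : Fin d → ℕ) (hc : ¬ (3 ≤ c ∧ c ≤ 3*d+2)) :
    List.count c (VG2 v) = 0 :=
  List.count_eq_zero.2 (fun hmem => hc (VG2_range hmem))

/-- All structural facts about `P1` needed for the upper bound. -/
lemma P1_facts {n d : ℕ} (hn : 0 < n) (u : Fin n → Fin d → ℕ) :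
    (∀ p, p <+: P1 (fun i => VG1 (u i)) 1 2 (3*d+3) (3*d+4) →
        List.count 2 p ≤ List.count (3*d+3) p) ∧
    List.count (3*d+3) (P1 (fun i => VG1 (u i)) 1 2 (3*d+3) (3*d+4)) = n - 1 ∧
    (∀ Q, Q <:+: P1 (fun i => VG1 (u i)) 1 2 (3*d+3) (3*d+4) →
        (Q.filter (isG d)).length ≤ (List.count (3*d+3) Q + 1) * (2*d) ∧
        (List.count (3*d+3) Q = 0 → ∃ i, Q.filter (isG d) <+ VG1 (u i))) ∧
    (∀ x ∈ P1 (fun i => VG1 (u i)) 1 2 (3*d+3) (3*d+4),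
        x = 1 ∨ x = 2 ∨ (3 ≤ x ∧ x ≤ 3*d+2) ∨ x = 3*d+3 ∨ x = 3*d+4) := by
  set Y := 3*d+3 with hY
  set Z := 3*d+4 with hZ
  set s : Fin n → List ℕ := fun i => VG1 (u i) with hs
  set i0 : Fin n := ⟨0, hn⟩ with hi0
  have hYB : (2:ℕ) ≠ Y := by omega
  have hGY : isG d Y = false := isG_false (by omega)
  have hSlen : ∀ i, (s i).length ≤ 2*d := fun i => length_VG1 (u i)
  -- the list of gadget blocks
  have hmap : ∃ m0 r, (List.finRange n).map s = m0 :: r := by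
    rcases List.exists_cons_of_ne_nil (by
      simp [List.map_eq_nil_iff]
      omega : (List.finRange n).map s ≠ []) with ⟨m0, r, h⟩
    exact ⟨m0, r, h⟩
  obtain ⟨m0, r, hmr⟩ := hmap
  have hmem_ms : ∀ m ∈ m0 :: r, ∃ i, m = s i := by
    rw [← hmr]
    intro m hm
    rcases List.mem_map.1 hm with ⟨i, _, rfl⟩
    exact ⟨i, rfl⟩
  have hrlen : r.length = n - 1 := by
    have := congrArg List.length hmr
    simp at this
    omega
  -- block-level facts
  have hblock : ∀ b, (b = [] ∨ ∃ m ∈ m0 :: r, b = [2] ++ m ++ [] ∨ b = [2] ++ m) →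
      List.count Y b = 0 ∧ List.count 2 b ≤ 1 ∧ (∃ i, b.filter (isG d) <+ s i) ∧
      (∀ x ∈ b, x = 1 ∨ x = 2 ∨ (3 ≤ x ∧ x ≤ 3*d+2) ∨ x = Y ∨ x = Z) := by
    rintro b (rfl | ⟨m, hm, rfl | rfl⟩)
    · exact ⟨rfl, by simp, ⟨i0, by simp⟩, by simp⟩
    all_goals {
      obtain ⟨i, rfl⟩ := hmem_ms m hm
      have e1 : List.count Y (s i) = 0 := count_VG1_zero (u i) (by omega)
      have e2 : List.count 2 (s i) = 0 := count_VG1_zero (u i) (by omega)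
      have e3 : (s i).filter (isG d) = s i := filter_VG1 (u i)
      have e4 : isG d 2 = false := isG_false (by omega)
      have e5 : List.count Y [2] = 0 := List.count_eq_zero.2 (by simp; omega)
      have e6 : List.count 2 [(2:ℕ)] = 1 := by simp
      refine ⟨?_, ?_, ⟨i, ?_⟩, ?_⟩
      · simp [List.count_cons, List.count_append, e1, hYB.symm, hYB]
      · simp [List.count_cons, List.count_append, e2]
      · simp [List.filter_cons, List.filter_append, e3, e4]
      · intro x hx
        simp at hx
        rcases hx with rfl | hx
        · tauto
        · exact Or.inr (Or.inr (Or.inl (VG1_range hx))) }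
  -- the P1 expression
  have hP1 : P1 s 1 2 Y Z = List.replicate (2*n) 1 ++
      (m0 ++ r.flatMap (fun m => [] ++ Y :: ([2] ++ m))) ++ List.replicate (2*n) Z := by
    rw [P1, hmr, intercalate_expand]
    rfl
  obtain ⟨iM, hm0⟩ := hmem_ms m0 (by simp)
  have hm0Y : List.count Y m0 = 0 := by rw [hm0]; exact count_VG1_zero (u iM) (by omega)
  have hm0B : List.count 2 m0 = 0 := by rw [hm0]; exact count_VG1_zero (u iM) (by omega)
  have hm0F : m0.filter (isG d) = m0 := by rw [hm0]; exact filter_VG1 (u iM)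
  have hm0mem : ∀ x ∈ m0, 3 ≤ x ∧ x ≤ 3*d+2 := by rw [hm0]; exact fun x hx => VG1_range hx
  have hArep : ∀ x ∈ List.replicate (2*n) 1, x = 1 := fun x hx => List.eq_of_mem_replicate hx
  have hZrep : ∀ x ∈ List.replicate (2*n) Z, x = Z := fun x hx => List.eq_of_mem_replicate hx
  have hAY : List.count Y (List.replicate (2*n) (1:ℕ)) = 0 :=
    List.count_eq_zero.2 (fun h => by have := List.eq_of_mem_replicate h; omega)
  have hAB : List.count 2 (List.replicate (2*n) (1:ℕ)) = 0 :=
    List.count_eq_zero.2 (fun h => by have := List.eq_of_mem_replicate h; omega)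
  have hZY : List.count Y (List.replicate (2*n) Z) = 0 :=
    List.count_eq_zero.2 (fun h => by have := List.eq_of_mem_replicate h; omega)
  have hZB : List.count 2 (List.replicate (2*n) Z) = 0 :=
    List.count_eq_zero.2 (fun h => by have := List.eq_of_mem_replicate h; omega)
  have hAF : (List.replicate (2*n) (1:ℕ)).filter (isG d) = [] := by
    rw [List.filter_eq_nil_iff]
    intro a ha
    rw [hArep a ha]
    simp [isG]
  have hZF : (List.replicate (2*n) Z).filter (isG d) = [] := by
    rw [List.filter_eq_nil_iff]
    intro a ha
    rw [hZrep a ha]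
    simp [isG]
    omega
  rcases hc : cells Y [] [2] r with ⟨c1, cT⟩
  have hflat : r.flatMap (fun m => [] ++ Y :: ([2] ++ m)) = Jn Y c1 cT := by
    rw [cells_spec, hc]
  rcases c1 with _ | ⟨m2, l⟩
  · -- n = 1 degenerate branch
    have hr : r = [] := by
      have := cells_fst_len Y [] [2] r
      rw [hc] at this
      simpa using this.symm
    subst hr
    have hcT : cT = [] := by simpa [cells] using hc.symm
    subst hcT
    have hP1' : P1 s 1 2 Y Z = List.replicate (2*n) 1 ++ m0 ++ List.replicate (2*n) Z := by
      rw [hP1]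
      simp [Jn, hflat]
    have hwhole : ∀ x ∈ P1 s 1 2 Y Z, x = 1 ∨ x = 2 ∨ (3 ≤ x ∧ x ≤ 3*d+2) ∨ x = Y ∨ x = Z := by
      rw [hP1']
      intro x hx
      rcases List.mem_append.1 hx with hx | hx
      · rcases List.mem_append.1 hx with hx | hx
        · exact Or.inl (hArep x hx)
        · exact Or.inr (Or.inr (Or.inl (hm0mem x hx)))
      · exact Or.inr (Or.inr (Or.inr (Or.inr (hZrep x hx))))
    have hcntB : List.count 2 (P1 s 1 2 Y Z) = 0 := by
      rw [hP1']
      simp [List.count_append, hAB, hZB, hm0B]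
    have hcntY : List.count Y (P1 s 1 2 Y Z) = 0 := by
      rw [hP1']
      simp [List.count_append, hAY, hZY, hm0Y]
    refine ⟨?_, ?_, ?_, hwhole⟩
    · intro p hp
      have := (hp.sublist).count_le 2
      omega
    · rw [hcntY]
      have h' : n - 1 = 0 := by simpa using hrlen.symm
      omega
    · intro Q hQ
      have hseg := seg (isG := isG d) (S := s) (D := 2*d) i0 hGY hSlen
        (l := []) (T := List.replicate (2*n) 1 ++ m0 ++ List.replicate (2*n) Z)
        (by simp) (⟨iM, by simp [List.filter_append, hAF, hZF, hm0F, hm0]⟩) Q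
        (by rw [← hP1']; exact hQ)
      exact hseg
  · -- main branch
    have hm2 : m2 = [] := cells_fst_head Y [] [2] r hc
    subst hm2
    have hJn : P1 s 1 2 Y Z =
        Jn Y ((List.replicate (2*n) 1 ++ m0) :: l) (cT ++ List.replicate (2*n) Z) := by
      rw [hP1, hflat]
      rw [show ([]:List ℕ) :: l = ([]:List ℕ) :: l from rfl]
      rw [show m0 ++ Jn Y ([] :: l) cT = Jn Y ((m0 ++ []) :: l) cT from
        append_Jn_cons Y m0 [] l cT, List.append_nil]
      rw [show List.replicate (2*n) 1 ++ Jn Y (m0 :: l) cT =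
        Jn Y ((List.replicate (2*n) 1 ++ m0) :: l) cT from append_Jn_cons Y _ m0 l cT]
      rw [Jn_append_right]
    have hshapes := cells_shapes Y [] [2] r
    rw [hc] at hshapes
    have hlB : ∀ b ∈ l, List.count Y b = 0 ∧ List.count 2 b ≤ 1 ∧
        (∃ i, b.filter (isG d) <+ s i) ∧
        (∀ x ∈ b, x = 1 ∨ x = 2 ∨ (3 ≤ x ∧ x ≤ 3*d+2) ∨ x = Y ∨ x = Z) := by
      intro b hb
      apply hblock
      rcases hshapes.1 b (by simp [hb]) with rfl | ⟨m, hm, rfl⟩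
      · exact Or.inl rfl
      · exact Or.inr ⟨m, by simp [hm], Or.inl rfl⟩
    have hcTB : List.count Y cT = 0 ∧ List.count 2 cT ≤ 1 ∧
        (∃ i, cT.filter (isG d) <+ s i) ∧
        (∀ x ∈ cT, x = 1 ∨ x = 2 ∨ (3 ≤ x ∧ x ≤ 3*d+2) ∨ x = Y ∨ x = Z) := by
      apply hblock
      rcases hshapes.2 with rfl | ⟨m, hm, rfl⟩
      · exact Or.inl rfl
      · exact Or.inr ⟨m, by simp [hm], Or.inr rfl⟩
    have hTfacts : List.count Y (cT ++ List.replicate (2*n) Z) = 0 ∧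
        List.count 2 (cT ++ List.replicate (2*n) Z) ≤ 1 ∧
        (∃ i, (cT ++ List.replicate (2*n) Z).filter (isG d) <+ s i) := by
      obtain ⟨i, hi⟩ := hcTB.2.2.1
      refine ⟨?_, ?_, ⟨i, ?_⟩⟩
      · rw [List.count_append, hcTB.1, hZY]
      · rw [List.count_append, hZB]
        have := hcTB.2.1
        omega
      · rw [List.filter_append, hZF, List.append_nil]
        exact hi
    have hHead : List.count Y (List.replicate (2*n) 1 ++ m0) = 0 ∧
        List.count 2 (List.replicate (2*n) 1 ++ m0) = 0 ∧
        (List.replicate (2*n) 1 ++ m0).filter (isG d) = m0 := by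
      refine ⟨?_, ?_, ?_⟩
      · rw [List.count_append, hAY, hm0Y]
      · rw [List.count_append, hAB, hm0B]
      · rw [List.filter_append, hAF, hm0F, List.nil_append]
    refine ⟨?_, ?_, ?_, ?_⟩
    · -- prefix invariant
      intro p hp
      rw [hJn] at hp
      exact preG_Jn_sep hYB hHead.2.1 (fun m hm => (hlB m hm).2.1) hTfacts.2.1 p hp
    · -- count Y
      rw [hJn, count_Jn ?_ hTfacts.1]
      · have h1 : (1:ℕ) + l.length = r.length := by
          have := cells_fst_len Y [] [2] r
          rw [hc] at this
          simp at this
          omega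
        simp
        omega
      · intro m hm
        rcases List.mem_cons.1 hm with rfl | hm
        · exact hHead.1
        · exact (hlB m hm).1
    · -- seg
      intro Q hQ
      refine seg (isG := isG d) (S := s) (D := 2*d) i0 hGY hSlen ?_ ?_ Q (by rw [← hJn]; exact hQ)
      · intro m hm
        rcases List.mem_cons.1 hm with rfl | hm
        · exact ⟨iM, by rw [hHead.2.2, hm0]⟩
        · exact (hlB m hm).2.2.1
      · exact hTfacts.2.2
    · -- membership
      intro x hx
      rw [hJn] at hx
      rcases mem_Jn hx with rfl | ⟨m, hm, hxm⟩ | hxT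
      · tauto
      · rcases List.mem_cons.1 hm with rfl | hm
        · rcases List.mem_append.1 hxm with h | h
          · exact Or.inl (hArep x h)
          · exact Or.inr (Or.inr (Or.inl (hm0mem x h)))
        · exact (hlB m hm).2.2.2 x hxm
      · rcases List.mem_append.1 hxT with h | h
        · exact hcTB.2.2.2 x h
        · exact Or.inr (Or.inr (Or.inr (Or.inr (hZrep x h))))


lemma pgoodAB_cons2 {rest : List ℕ} (h : List.count 1 rest ≤ 1) :
    ∀ p, p <+: (2 :: rest : List ℕ) → List.count 1 p ≤ List.count 2 p := by
  intro p hp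
  rcases List.prefix_cons_iff.1 hp with rfl | ⟨q, rfl, hq⟩
  · simp
  · have h1 := (hq.sublist).count_le 1
    simp [List.count_cons]
    omega

/-- All structural facts about `P2` needed for the upper bound. -/
lemma P2_facts {n d : ℕ} (hn : 0 < n) (v : Fin n → Fin d → ℕ) :
    (∀ p, p <+: P2 (fun j => VG2 (v j)) 1 2 (3*d+3) (3*d+4) →
        List.count 1 p ≤ List.count 2 p) ∧
    (∀ p, p <+: P2 (fun j => VG2 (v j)) 1 2 (3*d+3) (3*d+4) →
        List.count 2 p ≤ List.count (3*d+3) p) ∧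
    (∀ q, q <:+ P2 (fun j => VG2 (v j)) 1 2 (3*d+3) (3*d+4) →
        List.count (3*d+4) q ≤ List.count (3*d+3) q) ∧
    List.count (3*d+3) (P2 (fun j => VG2 (v j)) 1 2 (3*d+3) (3*d+4)) = 3*n - 1 ∧
    (∀ Q, Q <:+: P2 (fun j => VG2 (v j)) 1 2 (3*d+3) (3*d+4) →
        (Q.filter (isG d)).length ≤ (List.count (3*d+3) Q + 1) * (2*d) ∧
        (List.count (3*d+3) Q = 0 → ∃ j, Q.filter (isG d) <+ VG2 (v j))) := by
  set Y := 3*d+3 with hY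
  set Z := 3*d+4 with hZ
  set t : Fin n → List ℕ := fun j => VG2 (v j) with ht
  set j0 : Fin n := ⟨0, hn⟩ with hj0
  have hGY : isG d Y = false := isG_false (by omega)
  have hSlen : ∀ j, (t j).length ≤ 2*d := fun j => length_VG2 (v j)
  have hmap : ∃ m0 r, (List.finRange n).map t = m0 :: r := by
    rcases List.exists_cons_of_ne_nil (by
      simp [List.map_eq_nil_iff]
      omega : (List.finRange n).map t ≠ []) with ⟨m0, r, h⟩
    exact ⟨m0, r, h⟩
  obtain ⟨m0, r, hmr⟩ := hmap
  have hmem_ms : ∀ m ∈ m0 :: r, ∃ j, m = t j := by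
    rw [← hmr]
    intro m hm
    rcases List.mem_map.1 hm with ⟨j, _, rfl⟩
    exact ⟨j, rfl⟩
  have hrlen : r.length = n - 1 := by
    have := congrArg List.length hmr
    simp at this
    omega
  -- unified block properties
  have hblk : ∀ b, (b = [Z] ∨ b = [2,1,Z] ∨ b = ([2,1]:List ℕ) ∨
      (∃ m ∈ m0 :: r, b = [2,1] ++ m ++ [Z])) →
      List.count Y b = 0 ∧ List.count 2 b ≤ 1 ∧ List.count Z b ≤ 1 ∧
      (∀ p, p <+: b → List.count 1 p ≤ List.count 2 p) ∧
      (∃ j, b.filter (isG d) <+ t j) := by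
    have hcY1 : List.count Y [Z] = 0 := List.count_eq_zero.2 (by simp; omega)
    have hc21 : List.count 2 [Z] = 0 := List.count_eq_zero.2 (by simp; omega)
    have hcZ1 : List.count Z [Z] = 1 := by simp
    have hfZ : isG d Z = false := isG_false (by omega)
    have hfY : isG d Y = false := isG_false (by omega)
    have hf2 : isG d 2 = false := isG_false (by omega)
    have hf1 : isG d 1 = false := isG_false (by omega)
    have n1Z : (1:ℕ) ≠ Z := by omega
    have nZ1 : Z ≠ (1:ℕ) := by omega
    have n2Z : (2:ℕ) ≠ Z := by omega
    have nZ2 : Z ≠ (2:ℕ) := by omega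
    rintro b (rfl | rfl | rfl | ⟨m, hm, rfl⟩)
    · refine ⟨hcY1, by omega, by omega, ?_, ⟨j0, by simp [hfZ]⟩⟩
      intro p hp
      have := (hp.sublist).count_le 1
      have : List.count 1 [Z] = 0 := List.count_eq_zero.2 (by simp; omega)
      have := (hp.sublist).count_le 1
      omega
    · refine ⟨?_, ?_, ?_, pgoodAB_cons2 (by simp [List.count_cons, n1Z]), ⟨j0, by simp [hfZ, hf1, hf2]⟩⟩
      · apply List.count_eq_zero.2; simp; omega
      · simp [List.count_cons, n2Z, nZ2]
      · simp [List.count_cons, nZ1, nZ2, n1Z, n2Z]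
    · refine ⟨?_, ?_, ?_, pgoodAB_cons2 (by simp), ⟨j0, by simp [hf1, hf2]⟩⟩
      · apply List.count_eq_zero.2; simp; omega
      · simp [List.count_cons]
      · simp [List.count_cons, nZ1, nZ2, n1Z, n2Z]
    · obtain ⟨j, rfl⟩ := hmem_ms m hm
      have e1 : List.count Y (t j) = 0 := count_VG2_zero (v j) (by omega)
      have e2 : List.count 2 (t j) = 0 := count_VG2_zero (v j) (by omega)
      have eZ : List.count Z (t j) = 0 := count_VG2_zero (v j) (by omega)
      have e0 : List.count 1 (t j) = 0 := count_VG2_zero (v j) (by omega)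
      have e3 : (t j).filter (isG d) = t j := filter_VG2 (v j)
      have nY1 : Y ≠ (1:ℕ) := by omega
      have nY2 : Y ≠ (2:ℕ) := by omega
      have nYZ : Y ≠ Z := by omega
      have n1Zb : (1:ℕ) ≠ Z := by omega
      have n2Zb : (2:ℕ) ≠ Z := by omega
      have nZ1b : Z ≠ (1:ℕ) := by omega
      have nZ2b : Z ≠ (2:ℕ) := by omega
      refine ⟨?_, ?_, ?_, ?_, ⟨j, ?_⟩⟩
      · simp [List.count_append, List.count_cons, e1, nY1, nY2, nYZ, nY1.symm, nY2.symm, nYZ.symm]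
      · simp [List.count_append, List.count_cons, e2, n2Zb, nZ2b]
      · simp [List.count_append, List.count_cons, eZ, nZ1b, nZ2b, n1Zb, n2Zb]
      · have : List.count 1 ((1:ℕ) :: (t j ++ [Z])) ≤ 1 := by
          simp [List.count_cons, List.count_append, e0, n1Zb, nZ1b]
        exact pgoodAB_cons2 this
      · simp [List.filter_append, List.filter_cons, e3, hf1, hf2, hfZ]
  -- canonical form
  have hP2 : P2 t 1 2 Y Z = (List.replicate n [Z,Y,2,1]).flatten ++
      (m0 ++ r.flatMap (fun m => [Z] ++ Y :: ([2,1] ++ m))) ++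
      (List.replicate n [Z,Y,2,1]).flatten := by
    rw [P2, hmr, intercalate_expand]
    rfl
  have hF : (List.replicate n [Z,Y,2,1]).flatten =
      Jn Y ([Z] :: List.replicate (n-1) [2,1,Z]) [2,1] := by
    conv_lhs => rw [show n = (n-1)+1 by omega]
    exact rep_blk Z Y 2 1 (n-1)
  rcases hc : cells Y [Z] [2,1] r with ⟨c1, cT⟩
  have hflat : r.flatMap (fun m => [Z] ++ Y :: ([2,1] ++ m)) = Jn Y c1 cT := by
    rw [cells_spec, hc]
  have hshapes := cells_shapes Y [Z] [2,1] r
  rw [hc] at hshapes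
  have hsh1 : ∀ b ∈ c1, b = [Z] ∨ ∃ m ∈ r, b = [2,1] ++ m ++ [Z] := hshapes.1
  have hsh2 : cT = [] ∨ ∃ m ∈ r, cT = [2,1] ++ m := hshapes.2
  -- assemble into a single Jn
  have hasm : ∃ l', (∀ b ∈ l', b = [Z] ∨ b = [2,1,Z] ∨
        (∃ m ∈ m0 :: r, b = [2,1] ++ m ++ [Z])) ∧
      l'.length = 2*n - 2 ∧
      P2 t 1 2 Y Z = Jn Y ([Z] :: (List.replicate (n-1) [2,1,Z] ++
        ([2,1] ++ m0 ++ [Z]) :: l')) [2,1] := by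
    rcases c1 with _ | ⟨mh, l⟩
    · -- r = [], cT = []
      have hr : r = [] := by
        have := cells_fst_len Y [Z] [2,1] r
        rw [hc] at this
        simpa using this.symm
      subst hr
      have hcT : cT = [] := by simpa [cells] using hc.symm
      subst hcT
      have hn1 : n = 1 := by
        have h0 : (0:ℕ) = n - 1 := by simpa using hrlen
        omega
      refine ⟨List.replicate (n-1) [2,1,Z], ?_, by simp [hn1], ?_⟩
      · intro b hb
        exact Or.inr (Or.inl (List.eq_of_mem_replicate hb))
      · rw [hP2, hflat, hF]
        rw [show Jn Y ([]:List (List ℕ)) [] = [] from rfl, List.append_nil, List.append_assoc]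
        rw [append_Jn_cons Y m0 [Z] _ _]
        rw [Jn_append_right]
        rw [append_Jn_cons Y [2,1] (m0 ++ [Z]) _ _]
        rw [← Jn_concat]
        simp [List.append_assoc]
    · -- main case
      have hmh : mh = [Z] := cells_fst_head Y [Z] [2,1] r hc
      subst hmh
      have hllen : l.length = r.length - 1 := by
        have := cells_fst_len Y [Z] [2,1] r
        rw [hc] at this
        simp at this
        omega
      have hrne : r.length ≠ 0 := by
        have := cells_fst_len Y [Z] [2,1] r
        rw [hc] at this
        simp at this
        omega
      have hrge : r.length = n - 1 := hrlen
      refine ⟨l ++ (cT ++ [Z]) :: List.replicate (n-1) [2,1,Z], ?_, ?_, ?_⟩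
      · intro b hb
        rcases List.mem_append.1 hb with hb | hb
        · rcases hsh1 b (by simp [hb]) with rfl | ⟨m, hm, rfl⟩
          · exact Or.inl rfl
          · exact Or.inr (Or.inr ⟨m, by simp [hm], by simp [List.append_assoc]⟩)
        · rcases List.mem_cons.1 hb with rfl | hb
          · rcases hsh2 with h' | ⟨m, hm, h'⟩
            · rw [h']; exact Or.inl rfl
            · rw [h']; exact Or.inr (Or.inr ⟨m, by simp [hm], by simp [List.append_assoc]⟩)
          · exact Or.inr (Or.inl (List.eq_of_mem_replicate hb))
      · simp [hllen]
        omega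
      · rw [hP2, hflat, hF]
        have e1 : Jn Y ([Z] :: l) cT ++ Jn Y ([Z] :: List.replicate (n-1) [2,1,Z]) [2,1]
            = Jn Y ([Z] :: l) (Jn Y ((cT ++ [Z]) :: List.replicate (n-1) [2,1,Z]) [2,1]) := by
          rw [Jn_append_right, append_Jn_cons Y cT [Z] _ _]
        simp only [List.append_assoc]
        rw [e1]
        rw [append_Jn_cons Y m0 [Z] _ _]
        rw [Jn_append_right]
        rw [append_Jn_cons Y [2,1] (m0 ++ [Z]) _ _]
        rw [← Jn_concat, ← Jn_concat]
        simp [List.append_assoc]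
  obtain ⟨l', hl'shape, hl'len, hJn⟩ := hasm
  set L2 := [Z] :: (List.replicate (n-1) [2,1,Z] ++ ([2,1] ++ m0 ++ [Z]) :: l') with hL2
  have hLblk : ∀ b ∈ L2, List.count Y b = 0 ∧ List.count 2 b ≤ 1 ∧ List.count Z b ≤ 1 ∧
      (∀ p, p <+: b → List.count 1 p ≤ List.count 2 p) ∧
      (∃ j, b.filter (isG d) <+ t j) := by
    intro b hb
    apply hblk
    rw [hL2] at hb
    rcases List.mem_cons.1 hb with rfl | hb
    · exact Or.inl rfl
    rcases List.mem_append.1 hb with hb | hb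
    · exact Or.inr (Or.inl (List.eq_of_mem_replicate hb))
    rcases List.mem_cons.1 hb with rfl | hb
    · exact Or.inr (Or.inr (Or.inr ⟨m0, by simp, by simp [List.append_assoc]⟩))
    · rcases hl'shape b hb with h' | h' | h'
      · exact Or.inl h'
      · exact Or.inr (Or.inl h')
      · exact Or.inr (Or.inr (Or.inr h'))
  have hTblk := hblk ([2,1]) (Or.inr (Or.inr (Or.inl rfl)))
  refine ⟨?_, ?_, ?_, ?_, ?_⟩
  · -- A ≤ B prefixes
    intro p hp
    rw [hJn] at hp
    refine preG_Jn (by omega : (1:ℕ) ≠ Y) ?_ hTblk.2.2.2.1 p hp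
    intro m hm q hq
    exact (hLblk m hm).2.2.2.1 q hq
  · -- B ≤ Y prefixes
    intro p hp
    rw [hJn] at hp
    refine preG_Jn_sep (by omega : (2:ℕ) ≠ Y) ?_ ?_ hTblk.2.1 p hp
    · exact List.count_eq_zero.2 (by simp; omega)
    · intro m hm
      exact (hLblk m (List.mem_cons_of_mem _ hm)).2.1
  · -- Z ≤ Y suffixes
    intro q hq
    rw [hJn] at hq
    refine sufG_Jn_sep (by omega : Z ≠ Y) ?_ ?_ q hq
    · intro m hm
      exact (hLblk m hm).2.2.1
    · apply List.count_eq_zero.2; simp; omega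
  · -- count Y
    rw [hJn, count_Jn ?_ hTblk.1]
    · rw [hL2]
      simp [hl'len, hrlen]
      omega
    · intro m hm
      exact (hLblk m hm).1
  · -- seg
    intro Q hQ
    refine seg (isG := isG d) (S := t) (D := 2*d) j0 hGY hSlen ?_ hTblk.2.2.2.2 Q
      (by rw [← hJn]; exact hQ)
    intro m hm
    exact (hLblk m hm).2.2.2.2


lemma redWeight_A {d : ℕ} : redWeight d 1 = 2*d := by simp [redWeight]

lemma redWeight_B {d : ℕ} : redWeight d 2 = 4*d := by simp [redWeight]

lemma redWeight_Y {d : ℕ} : redWeight d (3*d+3) = 4*d := by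
  unfold redWeight
  rw [if_neg (by omega), if_neg (by omega), if_pos rfl]

lemma redWeight_Z {d : ℕ} : redWeight d (3*d+4) = 2*d := by
  unfold redWeight
  rw [if_neg (by omega), if_neg (by omega), if_neg (by omega), if_pos rfl]

lemma redWeight_G {d x : ℕ} (h : 3 ≤ x ∧ x ≤ 3*d+2) : redWeight d x = 1 := by
  unfold redWeight
  rw [if_neg (by omega), if_neg (by omega), if_neg (by omega), if_neg (by omega)]

lemma sum_map_replicate {w : ℕ → ℕ} (a x : ℕ) :
    ((List.replicate a x).map w).sum = a * w x := by
  rw [List.map_replicate, List.sum_replicate, smul_eq_mul]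

/-- The upper bound half of the combining argument. -/
lemma upper_bound {n d : ℕ} (hn : 0 < n) (hd : 0 < d) (u v : Fin n → Fin d → ℕ)
    (hu : ∀ i k, u i k = 0 ∨ u i k = 1) (hv : ∀ j k, v j k = 0 ∨ v j k = 1)
    {m : ℕ} (hm : ∀ i j, m ≤ ∑ k : Fin d, u i k * v j k) (hmd : m ≤ d)
    {C : List ℕ}
    (hC : CWIS (P1 (fun i => VG1 (u i)) 1 2 (3*d+3) (3*d+4))
               (P2 (fun j => VG2 (v j)) 1 2 (3*d+3) (3*d+4)) C) :
    (C.map (redWeight d)).sum ≤ d - m + (4*n - 2) * (2*d) := by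
  obtain ⟨hchain, hs1, hs2⟩ := hC
  obtain ⟨h1a, h1b, h1c, h1d⟩ := P1_facts hn u
  obtain ⟨h2a, h2b, h2c, h2d, h2e⟩ := P2_facts hn v
  set Y := 3*d+3 with hY
  set Z := 3*d+4 with hZ
  have hpwC : C.Pairwise (· ≤ ·) := List.isChain_iff_pairwise.1 hchain
  have hsym : ∀ x ∈ C, x = 1 ∨ x = 2 ∨ (3 ≤ x ∧ x ≤ 3*d+2) ∨ x = Y ∨ x = Z :=
    fun x hx => h1d x (hs1.subset hx)
  -- decompose C into five monotone groups
  set C1 := C.filter (fun x => decide (x ≤ 1)) with hC1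
  set D1 := C.filter (fun x => !decide (x ≤ 1)) with hD1
  have e1 : C = C1 ++ D1 := sorted_split 1 hpwC
  have hpwD1 : D1.Pairwise (· ≤ ·) := hpwC.sublist List.filter_sublist
  set C2 := D1.filter (fun x => decide (x ≤ 2)) with hC2
  set D2 := D1.filter (fun x => !decide (x ≤ 2)) with hD2
  have e2 : D1 = C2 ++ D2 := sorted_split 2 hpwD1
  have hpwD2 : D2.Pairwise (· ≤ ·) := hpwD1.sublist List.filter_sublist
  set G := D2.filter (fun x => decide (x ≤ 3*d+2)) with hG
  set D3 := D2.filter (fun x => !decide (x ≤ 3*d+2)) with hD3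
  have e3 : D2 = G ++ D3 := sorted_split (3*d+2) hpwD2
  have hpwD3 : D3.Pairwise (· ≤ ·) := hpwD2.sublist List.filter_sublist
  set C4 := D3.filter (fun x => decide (x ≤ 3*d+3)) with hC4
  set C5 := D3.filter (fun x => !decide (x ≤ 3*d+3)) with hC5
  have e4 : D3 = C4 ++ C5 := sorted_split (3*d+3) hpwD3
  have eC : C = C1 ++ (C2 ++ (G ++ (C4 ++ C5))) := by
    rw [e1, e2, e3, e4]
  -- membership in C for each part
  have mD1 : ∀ x ∈ D1, x ∈ C ∧ ¬ x ≤ 1 := by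
    intro x hx
    have := List.mem_filter.1 hx
    simpa using this
  have mD2 : ∀ x ∈ D2, x ∈ C ∧ ¬ x ≤ 2 := by
    intro x hx
    have h := List.mem_filter.1 hx
    have h2 := mD1 x h.1
    constructor
    · exact h2.1
    · simpa using h.2
  have mD3 : ∀ x ∈ D3, x ∈ C ∧ ¬ x ≤ 3*d+2 := by
    intro x hx
    have h := List.mem_filter.1 hx
    have h2 := mD2 x h.1
    constructor
    · exact h2.1
    · simpa using h.2
  -- identify the parts
  have idC1 : C1 = List.replicate C1.length 1 := by
    apply List.eq_replicate_of_mem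
    intro x hx
    have h := List.mem_filter.1 hx
    rcases hsym x h.1 with h' | h' | h' | h' | h' <;> first
      | exact h'
      | (exfalso; have := h.2; simp at this; omega)
  have idC2 : C2 = List.replicate C2.length 2 := by
    apply List.eq_replicate_of_mem
    intro x hx
    have h := List.mem_filter.1 hx
    have h1 := mD1 x h.1
    have h2 : x ≤ 2 := by simpa using h.2
    rcases hsym x h1.1 with h' | h' | h' | h' | h' <;> omega
  have idG : ∀ x ∈ G, 3 ≤ x ∧ x ≤ 3*d+2 := by
    intro x hx
    have h := List.mem_filter.1 hx
    have h1 := mD2 x h.1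
    have h2 : x ≤ 3*d+2 := by simpa using h.2
    omega
  have idC4 : C4 = List.replicate C4.length Y := by
    apply List.eq_replicate_of_mem
    intro x hx
    have h := List.mem_filter.1 hx
    have h1 := mD3 x h.1
    have h2 : x ≤ 3*d+3 := by simpa using h.2
    rcases hsym x h1.1 with h' | h' | h' | h' | h' <;> omega
  have idC5 : C5 = List.replicate C5.length Z := by
    apply List.eq_replicate_of_mem
    intro x hx
    have h := List.mem_filter.1 hx
    have h1 := mD3 x h.1
    have h2 : ¬ x ≤ 3*d+3 := by simpa using h.2
    rcases hsym x h1.1 with h' | h' | h' | h' | h' <;> omega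
  set a := C1.length
  set b := C2.length
  set g := G.length
  set y := C4.length
  set z := C5.length
  -- weight of C
  have hw : (C.map (redWeight d)).sum = 2*d*a + 4*d*b + g + (4*d*y + 2*d*z) := by
    rw [eC]
    simp only [List.map_append, List.sum_append]
    rw [show C1.map (redWeight d) = (List.replicate a 1).map (redWeight d) by rw [← idC1]]
    rw [show C2.map (redWeight d) = (List.replicate b 2).map (redWeight d) by rw [← idC2]]
    rw [show C4.map (redWeight d) = (List.replicate y Y).map (redWeight d) by rw [← idC4]]
    rw [show C5.map (redWeight d) = (List.replicate z Z).map (redWeight d) by rw [← idC5]]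
    rw [sum_map_replicate, sum_map_replicate, sum_map_replicate, sum_map_replicate]
    rw [redWeight_A, redWeight_B, hY, redWeight_Y, hZ, redWeight_Z]
    rw [sum_map_eq_length (fun x hx => redWeight_G (idG x hx))]
    ring
  -- split P1
  rw [eC] at hs1 hs2
  obtain ⟨Q1, Q15, hQa, hQ1, hs1'⟩ := List.append_sublist_iff.1 hs1
  obtain ⟨Q2, Q25, hQb, hQ2, hs1''⟩ := List.append_sublist_iff.1 hs1'
  obtain ⟨Q3, Q35, hQc, hQ3, hs1'''⟩ := List.append_sublist_iff.1 hs1''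
  obtain ⟨Q4, Q5, hQd, hQ4, hQ5⟩ := List.append_sublist_iff.1 hs1'''
  obtain ⟨R1, R15, hRa, hR1, hs2'⟩ := List.append_sublist_iff.1 hs2
  obtain ⟨R2, R25, hRb, hR2, hs2''⟩ := List.append_sublist_iff.1 hs2'
  obtain ⟨R3, R35, hRc, hR3, hs2'''⟩ := List.append_sublist_iff.1 hs2''
  obtain ⟨R4, R5, hRd, hR4, hR5⟩ := List.append_sublist_iff.1 hs2'''
  rw [hQd] at hQc
  rw [hQc] at hQb
  rw [hQb] at hQa
  rw [hRd] at hRc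
  rw [hRc] at hRb
  rw [hRb] at hRa
  -- hQa : P1 = Q1 ++ (Q2 ++ (Q3 ++ (Q4 ++ Q5)))
  set p' := List.count Y Q3 with hp'
  set q' := List.count Y R3 with hq'
  -- P1 county bound : b + y + p' ≤ n - 1
  have hbQ2 : b ≤ List.count 2 Q2 := by
    have := hQ2.count_le 2
    rw [idC2] at this
    simpa using this
  have hyQ4 : y ≤ List.count Y Q4 := by
    have := hQ4.count_le Y
    rw [idC4] at this
    simpa using this
  have hpre1 : (Q1 ++ Q2) <+: P1 (fun i => VG1 (u i)) 1 2 Y Z :=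
    ⟨Q3 ++ (Q4 ++ Q5), by simp [hQa, List.append_assoc]⟩
  have hBY1 := h1a _ hpre1
  have hcnt1 : List.count Y (Q1 ++ Q2) + List.count Y Q3 + List.count Y Q4 ≤ n - 1 := by
    have := h1b
    rw [hQa] at this
    simp only [List.count_append] at this ⊢
    omega
  have key1 : b + y + p' ≤ n - 1 := by
    have h2 : List.count 2 Q2 ≤ List.count 2 (Q1 ++ Q2) := by
      simp [List.count_append]
    omega
  -- P2 county bound : a + b + y + z + q' ≤ 3*n - 1
  have haR1 : a ≤ List.count 1 R1 := by
    have := hR1.count_le 1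
    rw [idC1] at this
    simpa using this
  have hbR2 : b ≤ List.count 2 R2 := by
    have := hR2.count_le 2
    rw [idC2] at this
    simpa using this
  have hyR4 : y ≤ List.count Y R4 := by
    have := hR4.count_le Y
    rw [idC4] at this
    simpa using this
  have hzR5 : z ≤ List.count Z R5 := by
    have := hR5.count_le Z
    rw [idC5] at this
    simpa using this
  have hpreR1 : R1 <+: P2 (fun j => VG2 (v j)) 1 2 Y Z :=
    ⟨R2 ++ (R3 ++ (R4 ++ R5)), by simp [hRa, List.append_assoc]⟩
  have hpreR12 : (R1 ++ R2) <+: P2 (fun j => VG2 (v j)) 1 2 Y Z :=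
    ⟨R3 ++ (R4 ++ R5), by simp [hRa, List.append_assoc]⟩
  have hsufR5 : R5 <:+ P2 (fun j => VG2 (v j)) 1 2 Y Z :=
    ⟨R1 ++ (R2 ++ (R3 ++ R4)), by simp [hRa, List.append_assoc]⟩
  have hAB2 := h2a _ hpreR1
  have hBY2 := h2b _ hpreR12
  have hZY2 := h2c _ hsufR5
  have hcnt2 : List.count Y (R1 ++ R2) + List.count Y R3 + List.count Y R4 +
      List.count Y R5 ≤ 3*n - 1 := by
    have := h2d
    rw [hRa] at this
    simp only [List.count_append] at this ⊢
    omega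
  have key2 : a + b + y + z + q' ≤ 3*n - 1 := by
    have h2 : List.count 2 R2 ≤ List.count 2 (R1 ++ R2) := by
      simp [List.count_append]
    have h3 : List.count 1 R1 ≤ List.count 2 R1 := hAB2
    have h4 : List.count 2 R1 + List.count 2 R2 = List.count 2 (R1 ++ R2) := by
      simp [List.count_append]
    omega
  -- gadget bounds
  have hGfilt : G.filter (isG d) = G :=
    List.filter_eq_self.2 (fun x hx => isG_true (idG x hx))
  have hGQ3 : G <+ Q3.filter (isG d) := by
    rw [← hGfilt]
    exact hQ3.filter (isG d)
  have hGR3 : G <+ R3.filter (isG d) := by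
    rw [← hGfilt]
    exact hR3.filter (isG d)
  have hinfQ3 : Q3 <:+: P1 (fun i => VG1 (u i)) 1 2 Y Z :=
    ⟨Q1 ++ Q2, Q4 ++ Q5, by simp [hQa, List.append_assoc]⟩
  have hinfR3 : R3 <:+: P2 (fun j => VG2 (v j)) 1 2 Y Z :=
    ⟨R1 ++ R2, R4 ++ R5, by simp [hRa, List.append_assoc]⟩
  have hseg1 := h1c Q3 hinfQ3
  have hseg2 := h2e R3 hinfR3
  have hg1 : g ≤ (p' + 1) * (2*d) := le_trans hGQ3.length_le hseg1.1
  have hg2 : g ≤ (q' + 1) * (2*d) := le_trans hGR3.length_le hseg2.1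
  have hGbound : g ≤ (d - m) + 2*d*(p' + q') := by
    by_cases h0 : p' = 0 ∧ q' = 0
    · obtain ⟨i, hi⟩ := hseg1.2 h0.1
      obtain ⟨j, hj⟩ := hseg2.2 h0.2
      have hub := gadget_ub (hu i) (hv j) (hGQ3.trans hi) (hGR3.trans hj)
      have := hm i j
      omega
    · rcases le_or_gt p' q' with hle | hlt
      · have hq1 : 1 ≤ q' := by omega
        calc g ≤ (p' + 1) * (2*d) := hg1
        _ ≤ (p' + q') * (2*d) := Nat.mul_le_mul_right _ (by omega)
        _ = 2*d*(p' + q') := by ring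
        _ ≤ _ := by omega
      · have hp1 : 1 ≤ p' := by omega
        calc g ≤ (q' + 1) * (2*d) := hg2
        _ ≤ (p' + q') * (2*d) := Nat.mul_le_mul_right _ (by omega)
        _ = 2*d*(p' + q') := by ring
        _ ≤ _ := by omega
  -- final assembly
  have hsum : (a + b + y + z) + (b + y) + (p' + q') ≤ 4*n - 2 := by omega
  have hmul : 2*d*((a + b + y + z) + (b + y) + (p' + q')) ≤ 2*d*(4*n - 2) :=
    Nat.mul_le_mul_left _ hsum
  rw [hw]
  have expand : 2*d*a + 4*d*b + (4*d*y + 2*d*z) + 2*d*(p' + q')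
      = 2*d*((a + b + y + z) + (b + y) + (p' + q')) := by ring
  have : 2*d*a + 4*d*b + (4*d*y + 2*d*z) + 2*d*(p'+q') ≤ 2*d*(4*n-2) := by
    rw [expand]
    exact hmul
  have final : 2*d*a + 4*d*b + g + (4*d*y + 2*d*z) ≤ (d - m) + 2*d*(4*n-2) := by omega
  calc 2*d*a + 4*d*b + g + (4*d*y + 2*d*z) ≤ (d - m) + 2*d*(4*n-2) := final
  _ = d - m + (4*n-2)*(2*d) := by ring


lemma intercalate_cons_ne {α} (sep m : List α) {rest : List (List α)} (h : rest ≠ []) :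
    List.intercalate sep (m :: rest) = m ++ sep ++ List.intercalate sep rest := by
  rcases List.exists_cons_of_ne_nil h with ⟨r0, r', rfl⟩
  rw [intercalate_expand, intercalate_expand, List.flatMap_cons]
  simp [List.append_assoc]

lemma intercalate_split {α} (sep mid : List α) : ∀ (l1 l2 : List (List α)),
    List.intercalate sep (l1 ++ mid :: l2) =
      l1.flatMap (fun m => m ++ sep) ++ (mid ++ l2.flatMap (fun m => sep ++ m))
  | [], l2 => by rw [List.nil_append, intercalate_expand, List.flatMap_nil, List.nil_append]
  | m :: l1, l2 => by
    rw [List.cons_append, intercalate_cons_ne sep m (by simp), intercalate_split sep mid l1 l2,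
      List.flatMap_cons]
    simp [List.append_assoc]

lemma flatten_rep_sublist_flatMap {α} (blk : List α) (f : List α → List α)
    (hf : ∀ m, blk <+ f m) : ∀ (l : List (List α)),
    (List.replicate l.length blk).flatten <+ l.flatMap f
  | [] => by simp
  | m :: l => by
    rw [List.length_cons, List.replicate_succ, List.flatten_cons, List.flatMap_cons]
    exact List.Sublist.append (hf m) (flatten_rep_sublist_flatMap blk f hf l)

lemma replicate_sublist_flatten_replicate {α} {x : α} {blk : List α} (hx : x ∈ blk) (k : ℕ) :
    List.replicate k x <+ (List.replicate k blk).flatten := by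
  have := replicate_sublist_flatMap x id (List.replicate k blk)
    (fun m hm => by rw [List.eq_of_mem_replicate hm]; exact hx)
  rw [List.flatMap_id] at this
  simpa using this

lemma flatten_replicate_add {α} (p q : ℕ) (blk : List α) :
    (List.replicate (p+q) blk).flatten =
      (List.replicate p blk).flatten ++ (List.replicate q blk).flatten := by
  rw [List.replicate_add, List.flatten_append]

/-- The lower bound construction. -/
lemma lower_bound {n d : ℕ} (hn : 0 < n) (hd : 0 < d) (u v : Fin n → Fin d → ℕ)
    (hu : ∀ i k, u i k = 0 ∨ u i k = 1) (hv : ∀ j k, v j k = 0 ∨ v j k = 1)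
    (i j : Fin n) :
    ∃ C : List ℕ, CWIS (P1 (fun i => VG1 (u i)) 1 2 (3*d+3) (3*d+4))
        (P2 (fun j => VG2 (v j)) 1 2 (3*d+3) (3*d+4)) C ∧
      (C.map (redWeight d)).sum + (∑ k : Fin d, u (i) k * v (j) k) = d + (4*n - 2) * (2*d) := by
  set Y := 3*d+3 with hY
  set Z := 3*d+4 with hZ
  set s : Fin n → List ℕ := fun i => VG1 (u i) with hs
  set t : Fin n → List ℕ := fun j => VG2 (v j) with ht
  have hi := i.isLt
  have hj := j.isLt
  set a := (n - 1 - i.val) + (j.val + 1) with ha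
  set b := i.val with hb
  set y := n - 1 - i.val with hy
  set z := (n - 1 - j.val) + (i.val + 1) with hz
  set G := G0 (u i) (v j) with hG0
  set C := List.replicate a 1 ++ (List.replicate b 2 ++ (G ++
    (List.replicate y Y ++ List.replicate z Z))) with hC
  refine ⟨C, ⟨?_, ?_, ?_⟩, ?_⟩
  · -- chain
    refine List.isChain_iff_pairwise.2 ?_
    rw [hC]
    have pw : ∀ (k x : ℕ), (List.replicate k x).Pairwise (· ≤ ·) :=
      fun k x => List.pairwise_replicate.2 (Or.inr le_rfl)
    have hGpw : G.Pairwise (· ≤ ·) := (G0_sorted (u i) (v j)).imp le_of_lt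
    have hGr : ∀ x ∈ G, 3 ≤ x ∧ x ≤ 3*d+2 := fun x hx => G0_range hx
    refine List.pairwise_append.2 ⟨pw _ _, ?_, ?_⟩
    · refine List.pairwise_append.2 ⟨pw _ _, ?_, ?_⟩
      · refine List.pairwise_append.2 ⟨hGpw, ?_, ?_⟩
        · refine List.pairwise_append.2 ⟨pw _ _, pw _ _, ?_⟩
          intro x hx w hw
          rw [List.eq_of_mem_replicate hx, List.eq_of_mem_replicate hw]
          omega
        · intro x hx w hw
          have := hGr x hx
          rcases List.mem_append.1 hw with hw | hw <;>
            rw [List.eq_of_mem_replicate hw] <;> omega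
      · intro x hx w hw
        rw [List.eq_of_mem_replicate hx]
        rcases List.mem_append.1 hw with hw | hw
        · exact (hGr w hw).1.trans' (by omega)
        · rcases List.mem_append.1 hw with hw | hw <;>
            rw [List.eq_of_mem_replicate hw] <;> omega
    · intro x hx w hw
      rw [List.eq_of_mem_replicate hx]
      rcases List.mem_append.1 hw with hw | hw
      · rw [List.eq_of_mem_replicate hw]
        omega
      · rcases List.mem_append.1 hw with hw | hw
        · exact (hGr w hw).1.trans' (by omega)
        · rcases List.mem_append.1 hw with hw | hw <;>
            rw [List.eq_of_mem_replicate hw] <;> omega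
  · -- sublist of P1
    have hsplit : (List.finRange n).map s =
        ((List.finRange n).map s).take i.val ++ s i :: ((List.finRange n).map s).drop (i.val+1) := by
      conv_lhs => rw [← List.take_append_drop i.val ((List.finRange n).map s)]
      congr 1
      rw [List.drop_eq_getElem_cons (by simpa using hi)]
      congr 1
      rw [List.getElem_map]
      congr 1
      rw [List.getElem_finRange]
      apply Fin.ext
      simp
    have hl1len : (((List.finRange n).map s).take i.val).length = i.val := by
      rw [List.length_take, List.length_map, List.length_finRange]
      exact Nat.min_eq_left (by omega)
    have hl2len : (((List.finRange n).map s).drop (i.val+1)).length = n - 1 - i.val := by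
      rw [List.length_drop, List.length_map, List.length_finRange]
      omega
    rw [P1, hsplit, intercalate_split]
    rw [hC]
    have hmid : List.replicate b 2 ++ (G ++ List.replicate y Y) <+
        (((List.finRange n).map s).take i.val).flatMap (fun m => m ++ [Y, 2]) ++
        (s i ++ (((List.finRange n).map s).drop (i.val+1)).flatMap (fun m => [Y, 2] ++ m)) := by
      refine List.Sublist.append ?_ (List.Sublist.append ?_ ?_)
      · have := replicate_sublist_flatMap 2 (fun m => m ++ [Y, 2])
          (((List.finRange n).map s).take i.val) (fun m _ => by simp)
        rwa [hl1len] at this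
      · exact G0_sublist1 (u i) (v j)
      · have := replicate_sublist_flatMap Y (fun m => [Y, 2] ++ m)
          (((List.finRange n).map s).drop (i.val+1)) (fun m _ => by simp)
        rwa [hl2len] at this
    have hA : List.replicate a (1:ℕ) <+ List.replicate (2*n) 1 :=
      (List.replicate_sublist_replicate 1).2 (by omega)
    have hZs : List.replicate z Z <+ List.replicate (2*n) Z :=
      (List.replicate_sublist_replicate Z).2 (by omega)
    calc List.replicate a 1 ++ (List.replicate b 2 ++ (G ++ (List.replicate y Y ++ List.replicate z Z)))
        = List.replicate a 1 ++ ((List.replicate b 2 ++ (G ++ List.replicate y Y)) ++ List.replicate z Z) := by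
          simp [List.append_assoc]
      _ <+ List.replicate (2*n) 1 ++ ((((List.finRange n).map s).take i.val).flatMap (fun m => m ++ [Y, 2]) ++
            (s i ++ (((List.finRange n).map s).drop (i.val+1)).flatMap (fun m => [Y, 2] ++ m)) ++ List.replicate (2*n) Z) :=
          List.Sublist.append hA (List.Sublist.append hmid hZs)
      _ = _ := by simp [List.append_assoc]
  · -- sublist of P2
    have hsplit : (List.finRange n).map t =
        ((List.finRange n).map t).take j.val ++ t j :: ((List.finRange n).map t).drop (j.val+1) := by
      conv_lhs => rw [← List.take_append_drop j.val ((List.finRange n).map t)]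
      congr 1
      rw [List.drop_eq_getElem_cons (by simpa using hj)]
      congr 1
      rw [List.getElem_map]
      congr 1
      rw [List.getElem_finRange]
      apply Fin.ext
      simp
    have hl1len : (((List.finRange n).map t).take j.val).length = j.val := by
      rw [List.length_take, List.length_map, List.length_finRange]
      exact Nat.min_eq_left (by omega)
    have hl2len : (((List.finRange n).map t).drop (j.val+1)).length = n - 1 - j.val := by
      rw [List.length_drop, List.length_map, List.length_finRange]
      omega
    rw [P2, hsplit, intercalate_split]
    rw [hC]
    -- the front part
    have hfront : List.replicate a 1 ++ List.replicate b 2 <+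
        (List.replicate n [Z,Y,2,1]).flatten ++
        (((List.finRange n).map t).take j.val).flatMap (fun m => m ++ [Z,Y,2,1]) := by
      have h1 : List.replicate a 1 ++ List.replicate b 2 <+
          (List.replicate (a+b) [Z,Y,2,1]).flatten := by
        rw [flatten_replicate_add]
        exact List.Sublist.append (replicate_sublist_flatten_replicate (by simp) a)
          (replicate_sublist_flatten_replicate (by simp) b)
      have h2 : (List.replicate (a+b) [Z,Y,2,1]).flatten <+
          (List.replicate n [Z,Y,2,1]).flatten ++
          (((List.finRange n).map t).take j.val).flatMap (fun m => m ++ [Z,Y,2,1]) := by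
        rw [show a + b = n + j.val by omega, flatten_replicate_add]
        refine List.Sublist.append (List.Sublist.refl _) ?_
        have := flatten_rep_sublist_flatMap [Z,Y,2,1] (fun m => m ++ [Z,Y,2,1])
          (fun m => by simp) (((List.finRange n).map t).take j.val)
        rwa [hl1len] at this
      exact h1.trans h2
    have hback : List.replicate y Y ++ List.replicate z Z <+
        (((List.finRange n).map t).drop (j.val+1)).flatMap (fun m => [Z,Y,2,1] ++ m) ++
        (List.replicate n [Z,Y,2,1]).flatten := by
      have h1 : List.replicate y Y ++ List.replicate z Z <+
          (List.replicate (y+z) [Z,Y,2,1]).flatten := by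
        rw [flatten_replicate_add]
        exact List.Sublist.append (replicate_sublist_flatten_replicate (by simp) y)
          (replicate_sublist_flatten_replicate (by simp) z)
      have h2 : (List.replicate (y+z) [Z,Y,2,1]).flatten <+
          (((List.finRange n).map t).drop (j.val+1)).flatMap (fun m => [Z,Y,2,1] ++ m) ++
          (List.replicate n [Z,Y,2,1]).flatten := by
        rw [show y + z = (n - 1 - j.val) + n by omega, flatten_replicate_add]
        refine List.Sublist.append ?_ (List.Sublist.refl _)
        have := flatten_rep_sublist_flatMap [Z,Y,2,1] (fun m => [Z,Y,2,1] ++ m)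
          (fun m => by simp) (((List.finRange n).map t).drop (j.val+1))
        rwa [hl2len] at this
      exact h1.trans h2
    have hGt : G <+ t j := G0_sublist2 (u i) (v j)
    calc List.replicate a 1 ++ (List.replicate b 2 ++ (G ++ (List.replicate y Y ++ List.replicate z Z)))
        = (List.replicate a 1 ++ List.replicate b 2) ++ (G ++
            (List.replicate y Y ++ List.replicate z Z)) := by simp [List.append_assoc]
      _ <+ ((List.replicate n [Z,Y,2,1]).flatten ++
            (((List.finRange n).map t).take j.val).flatMap (fun m => m ++ [Z,Y,2,1])) ++
            (t j ++ ((((List.finRange n).map t).drop (j.val+1)).flatMap (fun m => [Z,Y,2,1] ++ m) ++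
            (List.replicate n [Z,Y,2,1]).flatten)) :=
          List.Sublist.append hfront (List.Sublist.append hGt hback)
      _ = _ := by simp [List.append_assoc]
  · -- the weight computation
    have hGlen : G.length + (∑ k : Fin d, u i k * v j k) = d := G0_length (hu i) (hv j)
    rw [hC]
    simp only [List.map_append, List.sum_append]
    rw [sum_map_replicate, sum_map_replicate, sum_map_replicate, sum_map_replicate]
    rw [redWeight_A, redWeight_B, hY, redWeight_Y, hZ, redWeight_Z]
    rw [sum_map_eq_length (fun x hx => redWeight_G (G0_range hx))]
    have haz : a + z = 2*n := by omega
    have hby : b + y = n - 1 := by omega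
    have hn' : n = (n - 1) + 1 := by omega
    calc a * (2*d) + (b * (4*d) + (G.length + (y * (4*d) + z * (2*d)))) +
          (∑ k : Fin d, u i k * v j k)
        = (a + z) * (2*d) + (b + y) * (4*d) + (G.length + ∑ k : Fin d, u i k * v j k) := by ring
      _ = 2*n * (2*d) + (n-1) * (4*d) + d := by rw [haz, hby, hGlen]
      _ = d + (4*n - 2) * (2*d) := by
          rw [show (4*n-2) = 2*n + 2*(n-1) by omega]
          ring

end MOV

open MOV in
theorem most_orthogonal_vectors_reduction {n d : ℕ} (hn : 0 < n) (hd : 0 < d)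
    (u v : Fin n → Fin d → ℕ)
    (hu : ∀ i k, u i k = 0 ∨ u i k = 1) (hv : ∀ j k, v j k = 0 ∨ v j k = 1) :
    WLCWIS (redWeight d)
        (P1 (fun i => VG1 (u i)) 1 2 (3*d+3) (3*d+4))
        (P2 (fun j => VG2 (v j)) 1 2 (3*d+3) (3*d+4)) =
      d - sInf {p : ℕ | ∃ i j, ∑ k : Fin d, u i k * v j k = p} + (4*n - 2) * (2*d) ∧
    ∀ r : ℕ, r ≤ d →
      ((∃ i j, ∑ k : Fin d, u i k * v j k ≤ r) ↔
        d - r + (4*n - 2) * (2*d) ≤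
          WLCWIS (redWeight d)
            (P1 (fun i => VG1 (u i)) 1 2 (3*d+3) (3*d+4))
            (P2 (fun j => VG2 (v j)) 1 2 (3*d+3) (3*d+4))) := by
  set K := (4*n - 2) * (2*d) with hK
  set Sdot := {p : ℕ | ∃ i j, ∑ k : Fin d, u i k * v j k = p} with hSdot
  have hSne : Sdot.Nonempty := ⟨_, ⟨⟨0, hn⟩, ⟨0, hn⟩, rfl⟩⟩
  set m := sInf Sdot with hm
  obtain ⟨i0, j0, hij⟩ := Nat.sInf_mem hSne
  have hdotle : ∀ i j : Fin n, (∑ k : Fin d, u i k * v j k) ≤ d := by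
    intro i j
    calc (∑ k : Fin d, u i k * v j k) ≤ ∑ _k : Fin d, 1 := by
          refine Finset.sum_le_sum (fun k _ => ?_)
          rcases hu i k with h | h <;> rcases hv j k with h' | h' <;> simp [h, h']
    _ = d := by simp
  have hmd : m ≤ d := by rw [hm, ← hij]; exact hdotle i0 j0
  have hmle : ∀ i j : Fin n, m ≤ ∑ k : Fin d, u i k * v j k :=
    fun i j => Nat.sInf_le ⟨i, j, rfl⟩
  -- the set of weights
  have hbdd : BddAbove {w | ∃ C : List ℕ,
      CWIS (P1 (fun i => VG1 (u i)) 1 2 (3*d+3) (3*d+4))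
           (P2 (fun j => VG2 (v j)) 1 2 (3*d+3) (3*d+4)) C ∧
      (C.map (redWeight d)).sum = w} := by
    refine ⟨((P1 (fun i => VG1 (u i)) 1 2 (3*d+3) (3*d+4)).map (redWeight d)).sum, ?_⟩
    rintro w ⟨C, hC, rfl⟩
    exact List.Sublist.sum_le_sum (hC.2.1.map (redWeight d)) (fun x _ => Nat.zero_le x)
  obtain ⟨C0, hC0, hC0w⟩ := lower_bound hn hd u v hu hv i0 j0
  have hC0w' : (C0.map (redWeight d)).sum = d - m + K := by
    rw [hij] at hC0w
    omega
  have hupper : ∀ w ∈ {w | ∃ C : List ℕ,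
      CWIS (P1 (fun i => VG1 (u i)) 1 2 (3*d+3) (3*d+4))
           (P2 (fun j => VG2 (v j)) 1 2 (3*d+3) (3*d+4)) C ∧
      (C.map (redWeight d)).sum = w}, w ≤ d - m + K := by
    rintro w ⟨C, hC, rfl⟩
    exact upper_bound hn hd u v hu hv hmle hmd hC
  have hmain : WLCWIS (redWeight d)
      (P1 (fun i => VG1 (u i)) 1 2 (3*d+3) (3*d+4))
      (P2 (fun j => VG2 (v j)) 1 2 (3*d+3) (3*d+4)) = d - m + K := by
    rw [WLCWIS]
    refine le_antisymm (csSup_le ⟨_, ⟨C0, hC0, rfl⟩⟩ hupper) ?_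
    exact le_csSup hbdd ⟨C0, hC0, hC0w'⟩
  refine ⟨hmain, ?_⟩
  intro r hr
  rw [hmain]
  constructor
  · rintro ⟨i, j, hij2⟩
    have h1 : m ≤ r := le_trans (hmle i j) hij2
    have h2 : d - r ≤ d - m := Nat.sub_le_sub_left h1 d
    omega
  · intro h
    refine ⟨i0, j0, ?_⟩
    rw [hij]
    omega
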